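/- In the flat setting, $[L_k,\Lambda_h] = \sum_{i=1}^n E^i_k I^i_h$ for $k\neq h$, where $E^i_k$ is wedge multiplication by $dy^k_i$ and $I^i_h$ is contraction with the dual vector of $dy^h_i$. -/

import Mathlib

/-!
STATEMENT 11: In the flat setting, `[L_k, Λ_h] = ∑ i, E^i_k I^i_h` for `k ≠ h`, where
`E^i_k` is wedge multiplication by `dy^k_i` and `I^i_h` is contraction with the dual
vector of `dy^h_i`.
-/

noncomputable section

abbrev Idx (n s : ℕ) := Fin n ⊕ (Fin n × Fin s)

abbrev Vns (n s : ℕ) := Idx n s → ℝ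

abbrev Wns (n s : ℕ) := ExteriorAlgebra ℝ (Vns n s)

def bV (n s : ℕ) : Module.Basis (Idx n s) ℝ (Vns n s) := Pi.basisFun ℝ _

/-- An identification of the index set with `Fin (n + n*s)`, fixing an ordering of the
basis covectors `dx_1, …, dx_n, dy^1_1, …, dy^s_n`. -/
def idxEquiv (n s : ℕ) : Idx n s ≃ Fin (n + n * s) :=
  (Equiv.sumCongr (Equiv.refl (Fin n)) finProdFinEquiv).trans finSumFinEquiv

/-- The basis monomial `e_{a_1} ∧ ⋯ ∧ e_{a_k}` of the exterior algebra associated to a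
finite set `P` of indices (taken in increasing order). -/
def mono (n s : ℕ) (P : Finset (Idx n s)) : Wns n s :=
  (((P.image (idxEquiv n s)).sort (· ≤ ·)).map
    fun t => ExteriorAlgebra.ι ℝ (bV n s ((idxEquiv n s).symm t))).prod

/-- The Lefschetz operator `L_k`: wedge multiplication by `ω_k = ∑ i, dx_i ∧ dy^k_i`. -/
def Lop (n s : ℕ) (k : Fin s) : Wns n s →ₗ[ℝ] Wns n s :=
  LinearMap.mulLeft ℝ
    (∑ i : Fin n,
      ExteriorAlgebra.ι ℝ (bV n s (Sum.inl i))
        * ExteriorAlgebra.ι ℝ (bV n s (Sum.inr (i, k))))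

/-- Commutator of endomorphisms. -/
def lcomm {R M : Type*} [CommSemiring R] [AddCommGroup M] [Module R M]
    (A B : M →ₗ[R] M) : M →ₗ[R] M :=
  A ∘ₗ B - B ∘ₗ A

/-- Exterior multiplication by the basis covector indexed by `a`. -/
def Eop (n s : ℕ) (a : Idx n s) : Wns n s →ₗ[ℝ] Wns n s :=
  LinearMap.mulLeft ℝ (ExteriorAlgebra.ι ℝ (bV n s a))

/-- Interior contraction with the dual vector of the basis covector indexed by `a`. -/
def Iop (n s : ℕ) (a : Idx n s) : Wns n s →ₗ[ℝ] Wns n s :=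
  CliffordAlgebra.contractLeft ((bV n s).coord a)

namespace Aux

variable (n s : ℕ)

/-- basis vector indexed on the `Fin` side -/
def vv (t : Fin (n + n * s)) : Vns n s := bV n s ((idxEquiv n s).symm t)

/-- product of `ι` of basis vectors along a list -/
def fl (l : List (Fin (n + n * s))) : Wns n s :=
  (l.map fun t => ExteriorAlgebra.ι ℝ (vv n s t)).prod

@[simp] lemma fl_nil : fl n s [] = 1 := rfl

@[simp] lemma fl_cons (a : Fin (n + n * s)) (l : List (Fin (n + n * s))) :
    fl n s (a :: l) = ExteriorAlgebra.ι ℝ (vv n s a) * fl n s l := by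
  simp [fl]

lemma fl_append (l l' : List (Fin (n + n * s))) :
    fl n s (l ++ l') = fl n s l * fl n s l' := by
  simp [fl]

lemma mono_eq_fl (P : Finset (Idx n s)) :
    mono n s P = fl n s ((P.image (idxEquiv n s)).sort (· ≤ ·)) := rfl

lemma ι_swap (a b : Vns n s) :
    ExteriorAlgebra.ι ℝ a * ExteriorAlgebra.ι ℝ b
      = -(ExteriorAlgebra.ι ℝ b * ExteriorAlgebra.ι ℝ a) := by
  rw [eq_neg_iff_add_eq_zero, ExteriorAlgebra.ι_add_mul_swap]

lemma coord_bV (a b : Idx n s) :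
    (bV n s).coord a (bV n s b) = if a = b then 1 else 0 := by
  rw [Module.Basis.coord_apply, Module.Basis.repr_self]
  simp [Finsupp.single_apply, eq_comm]

/-- wedging with a basis covector, on a sorted monomial list -/
lemma E_fl (a : Fin (n + n * s)) :
    ∀ l : List (Fin (n + n * s)), l.Pairwise (· < ·) →
      ExteriorAlgebra.ι ℝ (vv n s a) * fl n s l
        = if a ∈ l then 0
          else ((-1 : ℝ) ^ (l.countP fun b => decide (b < a))) •
            fl n s (l.orderedInsert (· ≤ ·) a)
  | [], _ => by simp
  | b :: l, hs => by
    have hsl : l.Pairwise (· < ·) := hs.of_cons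
    rcases lt_trichotomy a b with hab | hab | hab
    · have ha : a ∉ b :: l := by
        intro hmem
        rcases List.mem_cons.mp hmem with h | h
        · exact absurd h (ne_of_lt hab)
        · exact absurd hab (not_lt.mpr (le_of_lt (List.rel_of_pairwise_cons hs h)))
      have hcnt : ((b :: l).countP fun c => decide (c < a)) = 0 := by
        refine List.countP_eq_zero.mpr ?_
        intro c hc
        rcases List.mem_cons.mp hc with h | h
        · subst h; simpa using not_lt.mpr (le_of_lt hab)
        · simpa using not_lt.mpr (le_of_lt (hab.trans (List.rel_of_pairwise_cons hs h)))
      have hins : (b :: l).orderedInsert (· ≤ ·) a = a :: b :: l := by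
        simp [List.orderedInsert, le_of_lt hab]
      rw [if_neg ha, hcnt, hins, fl_cons]
      simp
    · subst hab
      rw [fl_cons, ← mul_assoc, ExteriorAlgebra.ι_sq_zero, zero_mul,
        if_pos (List.mem_cons_self)]
    · have IH := E_fl a l hsl
      rw [fl_cons, ← mul_assoc, ι_swap, neg_mul, mul_assoc, IH]
      by_cases hmem : a ∈ l
      · rw [if_pos hmem, if_pos (List.mem_cons_of_mem b hmem)]
        simp
      · have ha : a ∉ b :: l := by
          intro hc
          rcases List.mem_cons.mp hc with h | h
          · exact absurd h (ne_of_gt hab)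
          · exact hmem h
        have hcnt : ((b :: l).countP fun c => decide (c < a))
            = (l.countP fun c => decide (c < a)) + 1 := by
          rw [List.countP_cons]
          simp [hab]
        have hins : (b :: l).orderedInsert (· ≤ ·) a
            = b :: l.orderedInsert (· ≤ ·) a := by
          simp [List.orderedInsert, not_le.mpr hab]
        rw [if_neg hmem, if_neg ha, hcnt, hins, fl_cons, pow_succ]
        rw [mul_smul_comm]
        rw [show ((-1:ℝ) ^ List.countP (fun c => decide (c < a)) l * -1)
          = -((-1:ℝ) ^ List.countP (fun c => decide (c < a)) l) by ring, neg_smul]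


/-- coordinate pairing on the `Fin` side -/
lemma coord_vv (a b : Fin (n + n * s)) :
    (bV n s).coord ((idxEquiv n s).symm a) (vv n s b) = if a = b then 1 else 0 := by
  rw [vv, coord_bV]
  simp [Equiv.symm_apply_eq, eq_comm]

/-- contraction with a dual basis covector, on a sorted monomial list -/
lemma I_fl (a : Fin (n + n * s)) :
    ∀ l : List (Fin (n + n * s)), l.Pairwise (· < ·) →
      CliffordAlgebra.contractLeft ((bV n s).coord ((idxEquiv n s).symm a)) (fl n s l)
        = if a ∈ l
          then ((-1 : ℝ) ^ (l.countP fun b => decide (b < a))) • fl n s (l.erase a)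
          else 0
  | [], _ => by simp
  | b :: l, hs => by
    have hsl : l.Pairwise (· < ·) := hs.of_cons
    have IH := I_fl a l hsl
    rw [fl_cons, CliffordAlgebra.contractLeft_ι_mul, coord_vv, IH]
    by_cases hab : a = b
    · subst hab
      have hnl : a ∉ l := fun h => (lt_irrefl a (List.rel_of_pairwise_cons hs h)).elim
      rw [if_neg hnl, if_pos rfl, if_pos (List.mem_cons_self), mul_zero, sub_zero,
        List.erase_cons_head]
      have hcnt : ((a :: l).countP fun c => decide (c < a)) = 0 := by
        refine List.countP_eq_zero.mpr ?_
        intro c hc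
        rcases List.mem_cons.mp hc with h | h
        · subst h; simp
        · simpa using not_lt.mpr (le_of_lt (List.rel_of_pairwise_cons hs h))
      rw [hcnt]
      simp
    · rw [if_neg hab, zero_smul, zero_sub]
      by_cases hmem : a ∈ l
      · have hba : b < a := List.rel_of_pairwise_cons hs hmem
        rw [if_pos hmem, if_pos (List.mem_cons_of_mem b hmem)]
        have hcnt : ((b :: l).countP fun c => decide (c < a))
            = (l.countP fun c => decide (c < a)) + 1 := by
          rw [List.countP_cons]; simp [hba]
        have her : (b :: l).erase a = b :: l.erase a :=
          List.erase_cons_tail (by simpa using fun h => hab h.symm)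
        rw [hcnt, her, fl_cons, pow_succ, mul_smul_comm]
        rw [show ((-1:ℝ) ^ List.countP (fun c => decide (c < a)) l * -1)
          = -((-1:ℝ) ^ List.countP (fun c => decide (c < a)) l) by ring, neg_smul]
      · have ha : a ∉ b :: l := by
          intro hc
          rcases List.mem_cons.mp hc with h | h
          · exact hab h
          · exact hmem h
        rw [if_neg ha, if_neg hmem, mul_zero, neg_zero]


/-- number of elements of `S` below `t` -/
def cnt (S : Finset (Fin (n + n * s))) (t : Fin (n + n * s)) : ℕ :=
  (S.filter (· < t)).card

lemma sort_insert_eq {t : Fin (n + n * s)} {Q : Finset (Fin (n + n * s))} (ht : t ∉ Q) :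
    (insert t Q).sort (· ≤ ·) = (Q.sort (· ≤ ·)).orderedInsert (· ≤ ·) t := by
  refine List.Perm.eq_of_pairwise' (Finset.pairwise_sort _ _)
    ((Finset.pairwise_sort Q _).orderedInsert t _) ?_
  have h1 : ((insert t Q).sort (· ≤ ·) : Multiset _)
      = ((t :: Q.sort (· ≤ ·) : List (Fin (n + n * s))) : Multiset (Fin (n + n * s))) := by
    rw [Finset.sort_eq, Finset.insert_val_of_notMem ht, ← Multiset.cons_coe, Finset.sort_eq]
  have h2 : List.Perm ((insert t Q).sort (· ≤ ·)) (t :: Q.sort (· ≤ ·)) :=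
    Multiset.coe_eq_coe.mp h1
  exact h2.trans (List.perm_orderedInsert _ _ _).symm

lemma sort_erase_eq (t : Fin (n + n * s)) (Q : Finset (Fin (n + n * s))) :
    (Q.erase t).sort (· ≤ ·) = (Q.sort (· ≤ ·)).erase t := by
  refine List.Perm.eq_of_pairwise' (Finset.pairwise_sort _ _)
    ((Finset.pairwise_sort Q _).erase _) ?_
  refine Multiset.coe_eq_coe.mp ?_
  rw [Finset.sort_eq, Finset.erase_val, ← Multiset.coe_erase, Finset.sort_eq]

lemma countP_sort (Q : Finset (Fin (n + n * s))) (t : Fin (n + n * s)) :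
    ((Q.sort (· ≤ ·)).countP fun b => decide (b < t)) = cnt n s Q t := by
  calc ((Q.sort (· ≤ ·)).countP fun b => decide (b < t))
      = Multiset.countP (· < t) ↑(Q.sort (· ≤ ·)) := (Multiset.coe_countP _ _).symm
    _ = Multiset.countP (· < t) Q.val := by rw [Finset.sort_eq]
    _ = cnt n s Q t := by rw [Multiset.countP_eq_card_filter]; rfl


lemma mem_image_iff (P : Finset (Idx n s)) (a : Idx n s) :
    idxEquiv n s a ∈ P.image (idxEquiv n s) ↔ a ∈ P := by
  rw [Finset.mem_image]
  constructor
  · rintro ⟨b, hb, hba⟩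
    rwa [← (idxEquiv n s).injective hba]
  · exact fun h => ⟨a, h, rfl⟩

lemma bV_eq_vv (a : Idx n s) : bV n s a = vv n s (idxEquiv n s a) := by
  rw [vv, Equiv.symm_apply_apply]

lemma E_mono (a : Idx n s) (P : Finset (Idx n s)) :
    Eop n s a (mono n s P)
      = if a ∈ P then 0
        else ((-1 : ℝ) ^ cnt n s (P.image (idxEquiv n s)) (idxEquiv n s a)) •
          mono n s (insert a P) := by
  rw [Eop, LinearMap.mulLeft_apply, mono_eq_fl, bV_eq_vv,
    E_fl n s _ _ (List.sortedLT_iff_pairwise.mp (Finset.sortedLT_sort _))]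
  by_cases hmem : a ∈ P
  · rw [if_pos ((Finset.mem_sort _).mpr ((mem_image_iff n s P a).mpr hmem)), if_pos hmem]
  · have h1 : idxEquiv n s a ∉ (P.image (idxEquiv n s)).sort (· ≤ ·) := by
      rw [Finset.mem_sort, mem_image_iff]
      exact hmem
    rw [if_neg h1, if_neg hmem, countP_sort, mono_eq_fl, Finset.image_insert,
      sort_insert_eq n s (by rw [mem_image_iff]; exact hmem)]

lemma I_mono (a : Idx n s) (P : Finset (Idx n s)) :
    Iop n s a (mono n s P)
      = if a ∈ P
        then ((-1 : ℝ) ^ cnt n s (P.image (idxEquiv n s)) (idxEquiv n s a)) •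
          mono n s (P.erase a)
        else 0 := by
  have hc : (bV n s).coord a = (bV n s).coord ((idxEquiv n s).symm (idxEquiv n s a)) := by
    rw [Equiv.symm_apply_apply]
  rw [Iop, hc, mono_eq_fl, I_fl n s _ _ (List.sortedLT_iff_pairwise.mp (Finset.sortedLT_sort _))]
  by_cases hmem : a ∈ P
  · rw [if_pos ((Finset.mem_sort _).mpr ((mem_image_iff n s P a).mpr hmem)), if_pos hmem,
      countP_sort, mono_eq_fl, Finset.image_erase (idxEquiv n s).injective,
      sort_erase_eq]
  · rw [if_neg hmem, if_neg (by rw [Finset.mem_sort, mem_image_iff]; exact hmem)]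


lemma mono_empty : mono n s (∅ : Finset (Idx n s)) = 1 := by
  rw [mono_eq_fl]
  simp

lemma mono_singleton (a : Idx n s) :
    mono n s ({a} : Finset (Idx n s)) = ExteriorAlgebra.ι ℝ (bV n s a) := by
  rw [mono_eq_fl, Finset.image_singleton, Finset.sort_singleton, fl_cons, fl_nil, mul_one,
    bV_eq_vv]

lemma Eop_span (a : Idx n s) {x : Wns n s}
    (hx : x ∈ Submodule.span ℝ (Set.range (mono n s))) :
    Eop n s a x ∈ Submodule.span ℝ (Set.range (mono n s)) := by
  induction hx using Submodule.span_induction with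
  | mem y hy =>
    obtain ⟨P, rfl⟩ := hy
    rw [E_mono]
    split_ifs
    · exact Submodule.zero_mem _
    · exact Submodule.smul_mem _ _ (Submodule.subset_span ⟨_, rfl⟩)
  | zero => simpa using Submodule.zero_mem _
  | add y z _ _ hy hz => simpa [map_add] using Submodule.add_mem _ hy hz
  | smul c y _ hy => simpa [map_smul] using Submodule.smul_mem _ c hy

lemma fl_mem_span : ∀ l : List (Fin (n + n * s)),
    fl n s l ∈ Submodule.span ℝ (Set.range (mono n s))
  | [] => by
    rw [fl_nil, ← mono_empty]
    exact Submodule.subset_span ⟨_, rfl⟩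
  | a :: l => by
    have : fl n s (a :: l) = Eop n s ((idxEquiv n s).symm a) (fl n s l) := by
      rw [fl_cons, Eop, LinearMap.mulLeft_apply, vv]
    rw [this]
    exact Eop_span n s _ (fl_mem_span l)

lemma span_mono_top : Submodule.span ℝ (Set.range (mono n s)) = ⊤ := by
  rw [eq_top_iff]
  rintro x -
  induction x using CliffordAlgebra.induction with
  | algebraMap r =>
    rw [Algebra.algebraMap_eq_smul_one, ← mono_empty]
    exact Submodule.smul_mem _ _ (Submodule.subset_span ⟨_, rfl⟩)
  | ι m =>
    rw [← (bV n s).sum_repr m, map_sum]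
    refine Submodule.sum_mem _ fun a _ => ?_
    rw [map_smul, ← mono_singleton]
    exact Submodule.smul_mem _ _ (Submodule.subset_span ⟨_, rfl⟩)
  | mul x y hx hy =>
    induction hx using Submodule.span_induction with
    | mem u hu =>
      induction hy using Submodule.span_induction with
      | mem v hv =>
        obtain ⟨P, rfl⟩ := hu
        obtain ⟨Q, rfl⟩ := hv
        rw [mono_eq_fl, mono_eq_fl, ← fl_append]
        exact fl_mem_span n s _
      | zero => simpa using Submodule.zero_mem _
      | add v w _ _ hv hw => simpa [mul_add] using Submodule.add_mem _ hv hw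
      | smul c v _ hv => simpa [mul_smul_comm] using Submodule.smul_mem _ c hv
    | zero => simpa using Submodule.zero_mem _
    | add u w _ _ hu hw => simpa [add_mul] using Submodule.add_mem _ hu hw
    | smul c u _ hu => simpa [smul_mul_assoc] using Submodule.smul_mem _ c hu
  | add x y hx hy => exact Submodule.add_mem _ hx hy


lemma cnt_insert_not_lt {u t : Fin (n + n * s)} (h : ¬ u < t)
    (S : Finset (Fin (n + n * s))) : cnt n s (insert u S) t = cnt n s S t := by
  rw [cnt, cnt, Finset.filter_insert, if_neg h]

lemma lt_xy (i j : Fin n) (k : Fin s) :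
    idxEquiv n s (Sum.inl i) < idxEquiv n s (Sum.inr (j, k)) := by
  simp only [idxEquiv, Equiv.trans_apply, Equiv.sumCongr_apply, Sum.map_inl, Sum.map_inr,
    Equiv.refl_apply, finSumFinEquiv_apply_left, finSumFinEquiv_apply_right]
  rw [Fin.lt_def, Fin.coe_castAdd, Fin.coe_natAdd]
  have := i.isLt
  omega

lemma adj_term (B : Wns n s →ₗ[ℝ] Wns n s →ₗ[ℝ] ℝ)
    (hBortho : ∀ P Q : Finset (Idx n s),
      B (mono n s P) (mono n s Q) = if P = Q then 1 else 0)
    (i : Fin n) (hh : Fin s) (P Q : Finset (Idx n s)) :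
    B (Eop n s (Sum.inl i) (Eop n s (Sum.inr (i, hh)) (mono n s P))) (mono n s Q)
      = B (mono n s P) (Iop n s (Sum.inr (i, hh)) (Iop n s (Sum.inl i) (mono n s Q))) := by
  set a : Idx n s := Sum.inl i with ha_def
  set b : Idx n s := Sum.inr (i, hh) with hb_def
  have hab : a ≠ b := by simp [ha_def, hb_def]
  have htab : idxEquiv n s a < idxEquiv n s b := lt_xy n s i i hh
  have rhs0 : (b ∈ P ∨ (a ∉ P ∧ ¬ Q = insert a (insert b P)) ∨ (a ∈ P ∧ b ∉ P)) →
      B (mono n s P) (Iop n s b (Iop n s a (mono n s Q))) = 0 := by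
    intro hcase
    rw [I_mono]
    by_cases haQ : a ∈ Q
    · rw [if_pos haQ, map_smul, I_mono]
      by_cases hbQ : b ∈ Q.erase a
      · rw [if_pos hbQ]
        have hne : P ≠ (Q.erase a).erase b := by
          intro hPE
          have hQ' : Q = insert a (insert b P) := by
            rw [hPE, Finset.insert_erase hbQ, Finset.insert_erase haQ]
          rcases hcase with h | h | h
          · exact Finset.notMem_erase b _ (hPE ▸ h)
          · exact h.2 hQ'
          · exact (fun hc => Finset.notMem_erase a Q (Finset.mem_of_mem_erase hc))
              (hPE ▸ h.1)
        simp only [map_smul, smul_eq_mul]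
        rw [hBortho, if_neg hne]
        ring
      · rw [if_neg hbQ]
        simp
    · rw [if_neg haQ]
      simp
  by_cases hbP : b ∈ P
  · rw [E_mono, if_pos hbP, map_zero, map_zero, LinearMap.zero_apply,
      rhs0 (Or.inl hbP)]
  · by_cases haP : a ∈ P
    · have haP' : a ∈ insert b P := Finset.mem_insert_of_mem haP
      rw [E_mono, if_neg hbP, map_smul, E_mono, if_pos haP', smul_zero, map_zero,
        LinearMap.zero_apply, rhs0 (Or.inr (Or.inr ⟨haP, hbP⟩))]
    · have haP' : a ∉ insert b P := by
        rw [Finset.mem_insert]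
        rintro (h | h)
        exacts [hab h, haP h]
      by_cases hQ : Q = insert a (insert b P)
      · subst hQ
        have haQ : a ∈ insert a (insert b P) := Finset.mem_insert_self a _
        have herase : (insert a (insert b P)).erase a = insert b P :=
          Finset.erase_insert haP'
        have herase2 : (insert b P).erase b = P := Finset.erase_insert hbP
        rw [E_mono, if_neg hbP, map_smul, E_mono, if_neg haP',
          I_mono, if_pos haQ, herase, LinearMap.map_smul (Iop n s b), I_mono,
          if_pos (Finset.mem_insert_self b P), herase2]
        simp only [map_smul, LinearMap.smul_apply, smul_eq_mul, smul_smul]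
        rw [hBortho, hBortho, if_pos rfl, if_pos rfl]
        have himg : (insert a (insert b P)).image (idxEquiv n s)
            = insert (idxEquiv n s a) (insert (idxEquiv n s b) (P.image (idxEquiv n s))) := by
          rw [Finset.image_insert, Finset.image_insert]
        have himgb : (insert b P).image (idxEquiv n s)
            = insert (idxEquiv n s b) (P.image (idxEquiv n s)) := Finset.image_insert _ _ _
        rw [himg, himgb]
        simp only [cnt_insert_not_lt n s (lt_irrefl (idxEquiv n s a)),
          cnt_insert_not_lt n s (lt_irrefl (idxEquiv n s b)),
          cnt_insert_not_lt n s (not_lt.mpr (le_of_lt htab))]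
        ring
      · rw [E_mono, if_neg hbP, map_smul, E_mono, if_neg haP',
          rhs0 (Or.inr (Or.inl ⟨haP, hQ⟩))]
        simp only [map_smul, LinearMap.smul_apply, smul_eq_mul, smul_smul]
        rw [hBortho, if_neg (fun hc => hQ hc.symm)]
        ring


/-- the explicit adjoint of `Lop` -/
def Lam' (hh : Fin s) : Wns n s →ₗ[ℝ] Wns n s :=
  ∑ j : Fin n, Iop n s (Sum.inr (j, hh)) ∘ₗ Iop n s (Sum.inl j)

lemma Lop_apply (k : Fin s) (x : Wns n s) :
    Lop n s k x = ∑ i : Fin n, Eop n s (Sum.inl i) (Eop n s (Sum.inr (i, k)) x) := by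
  simp [Lop, Eop, Finset.sum_mul, mul_assoc]

lemma Lam'_apply (hh : Fin s) (x : Wns n s) :
    Lam' n s hh x = ∑ j : Fin n, Iop n s (Sum.inr (j, hh)) (Iop n s (Sum.inl j) x) := by
  simp [Lam']

lemma adj (B : Wns n s →ₗ[ℝ] Wns n s →ₗ[ℝ] ℝ)
    (hBortho : ∀ P Q : Finset (Idx n s),
      B (mono n s P) (mono n s Q) = if P = Q then 1 else 0)
    (hh : Fin s) (P Q : Finset (Idx n s)) :
    B (Lop n s hh (mono n s P)) (mono n s Q)
      = B (mono n s P) (Lam' n s hh (mono n s Q)) := by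
  rw [Lop_apply, Lam'_apply, map_sum, LinearMap.sum_apply, map_sum]
  exact Finset.sum_congr rfl fun i _ => adj_term n s B hBortho i hh P Q

lemma nondeg (B : Wns n s →ₗ[ℝ] Wns n s →ₗ[ℝ] ℝ)
    (hBortho : ∀ P Q : Finset (Idx n s),
      B (mono n s P) (mono n s Q) = if P = Q then 1 else 0)
    (v : Wns n s) (hv : ∀ P, B (mono n s P) v = 0) : v = 0 := by
  have hvmem : v ∈ Submodule.span ℝ (Set.range (mono n s)) := by
    rw [span_mono_top]
    exact Submodule.mem_top
  obtain ⟨c, hc⟩ := Submodule.mem_span_range_iff_exists_fun ℝ |>.mp hvmem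
  have hcz : ∀ P, c P = 0 := by
    intro P
    have := hv P
    rw [← hc, map_sum] at this
    simpa [hBortho, Finset.sum_ite_eq] using this
  rw [← hc]
  simp [hcz]

lemma lam_eq (B : Wns n s →ₗ[ℝ] Wns n s →ₗ[ℝ] ℝ)
    (hBortho : ∀ P Q : Finset (Idx n s),
      B (mono n s P) (mono n s Q) = if P = Q then 1 else 0)
    (Λ : Fin s → (Wns n s →ₗ[ℝ] Wns n s))
    (hΛ : ∀ (k : Fin s) (α β : Wns n s), B (Lop n s k α) β = B α (Λ k β))
    (hh : Fin s) : Λ hh = Lam' n s hh := by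
  refine LinearMap.ext_on_range (span_mono_top n s) fun Q => ?_
  have hdiff : ∀ P, B (mono n s P) (Λ hh (mono n s Q) - Lam' n s hh (mono n s Q)) = 0 := by
    intro P
    rw [map_sub, ← hΛ, adj n s B hBortho]
    ring
  exact sub_eq_zero.mp (nondeg n s B hBortho _ hdiff)


lemma IE (c a : Idx n s) (x : Wns n s) :
    Iop n s c (Eop n s a x)
      = (bV n s).coord c (bV n s a) • x - Eop n s a (Iop n s c x) := by
  rw [Iop, Eop, LinearMap.mulLeft_apply, CliffordAlgebra.contractLeft_ι_mul,
    LinearMap.mulLeft_apply]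

lemma bracket (a b c d : Idx n s) (hca : (bV n s).coord c (bV n s a) = 0)
    (hcb : (bV n s).coord c (bV n s b) = 0)
    (hdb : (bV n s).coord d (bV n s b) = 0) (x : Wns n s) :
    Eop n s a (Eop n s b (Iop n s c (Iop n s d x)))
        - Iop n s c (Iop n s d (Eop n s a (Eop n s b x)))
      = (bV n s).coord d (bV n s a) • Eop n s b (Iop n s c x) := by
  simp only [IE, hca, hcb, hdb, zero_smul, zero_sub, map_neg, map_add, map_sub, map_smul,
    smul_sub, smul_neg, neg_neg, sub_neg_eq_add, neg_sub]
  module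

lemma comm_eq (k hh : Fin s) (hkh : k ≠ hh) :
    lcomm (Lop n s k) (Lam' n s hh)
      = ∑ i : Fin n, Eop n s (Sum.inr (i, k)) ∘ₗ Iop n s (Sum.inr (i, hh)) := by
  apply LinearMap.ext
  intro x
  simp only [lcomm, LinearMap.sub_apply, LinearMap.comp_apply, LinearMap.sum_apply]
  have h1 : Lop n s k (Lam' n s hh x)
      = ∑ i : Fin n, ∑ j : Fin n,
          Eop n s (Sum.inl i) (Eop n s (Sum.inr (i, k))
            (Iop n s (Sum.inr (j, hh)) (Iop n s (Sum.inl j) x))) := by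
    rw [Lam'_apply, Lop_apply]
    simp only [map_sum]
  have h2 : Lam' n s hh (Lop n s k x)
      = ∑ i : Fin n, ∑ j : Fin n,
          Iop n s (Sum.inr (j, hh)) (Iop n s (Sum.inl j)
            (Eop n s (Sum.inl i) (Eop n s (Sum.inr (i, k)) x))) := by
    rw [Lop_apply, Lam'_apply]
    simp only [map_sum]
    rw [Finset.sum_comm]
  rw [h1, h2, ← Finset.sum_sub_distrib]
  refine Finset.sum_congr rfl fun i _ => ?_
  rw [← Finset.sum_sub_distrib]
  have hstep : ∀ j : Fin n,
      Eop n s (Sum.inl i) (Eop n s (Sum.inr (i, k))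
          (Iop n s (Sum.inr (j, hh)) (Iop n s (Sum.inl j) x)))
        - Iop n s (Sum.inr (j, hh)) (Iop n s (Sum.inl j)
            (Eop n s (Sum.inl i) (Eop n s (Sum.inr (i, k)) x)))
      = (bV n s).coord (Sum.inl j) (bV n s (Sum.inl i)) •
          Eop n s (Sum.inr (i, k)) (Iop n s (Sum.inr (j, hh)) x) := by
    intro j
    refine bracket n s _ _ _ _ ?_ ?_ ?_ x
    · rw [coord_bV]; simp
    · rw [coord_bV]
      simp only [Sum.inr.injEq, Prod.mk.injEq, ite_eq_right_iff, and_imp]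
      intro _ hc
      exact absurd hc.symm hkh
    · rw [coord_bV]; simp
  simp only [hstep, coord_bV, Sum.inl.injEq, ite_smul, one_smul, zero_smul]
  simp [Finset.sum_ite_eq]

end Aux

theorem stmt11 (n s : ℕ)
    (B : Wns n s →ₗ[ℝ] Wns n s →ₗ[ℝ] ℝ)
    (hBsymm : ∀ α β, B α β = B β α)
    (hBortho : ∀ P Q : Finset (Idx n s),
      B (mono n s P) (mono n s Q) = if P = Q then 1 else 0)
    (Λ : Fin s → (Wns n s →ₗ[ℝ] Wns n s))
    (hΛ : ∀ (k : Fin s) (α β : Wns n s), B (Lop n s k α) β = B α (Λ k β)) :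
    ∀ k h : Fin s, k ≠ h →
      lcomm (Lop n s k) (Λ h)
        = ∑ i : Fin n, Eop n s (Sum.inr (i, k)) ∘ₗ Iop n s (Sum.inr (i, h)) := by
  intro k h hkh
  rw [Aux.lam_eq n s B hBortho Λ hΛ h]
  exact Aux.comm_eq n s k h hkh
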